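/- For the stuffle product ∗ on ℚ⟨Y^bi⟩ and the generating series ρ(W)_d of words in ℚ⟨Y^bi⟩, for all 0 < n < d one has: ρ(W)(X₁,…,X_n;Y₁,…,Y_n) ∗ ρ(W)(X_{n+1},…,X_d;Y_{n+1},…,Y_d) = ρ(W)(X₁;Y₁)·(ρ(W)(X₂,…,X_n;Y₂,…,Y_n) ∗ ρ(W)(X_{n+1},…,X_d;Y_{n+1},…,Y_d)) + ρ(W)(X_{n+1};Y_{n+1})·(ρ(W)(X₁,…,X_n;Y₁,…,Y_n) ∗ ρ(W)(X_{n+2},…,X_d;Y_{n+2},…,Y_d)) + [(ρ(W)(X₁;Y₁+Y_{n+1}) − ρ(W)(X_{n+1};Y₁+Y_{n+1}))/(X₁−X_{n+1})]·(ρ(W)(X₂,…,X_n;Y₂,…,Y_n) ∗ ρ(W)(X_{n+2},…,X_d;Y_{n+2},…,Y_d)). Here · is the concatenation product extended bilinearly over the power series variables, ∗ is also extended bilinearly, and the difference quotient (A(X₁)−A(X_{n+1}))/(X₁−X_{n+1}) of a power series A(X) = Σ_k a_k X^k denotes the power series Σ_k a_k Σ_{i+j=k−1} X₁^i X_{n+1}^j.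 -/

import Mathlib

/-!
STATEMENT 1: the recursive formula for the stuffle product `∗` on the generating
series of words in `ℚ⟨Y^bi⟩`.

`ℚ⟨Y^bi⟩` is realized as the space of finite `ℚ`-linear combinations of words in the
alphabet `Y^bi = {y_{k,m} : k ≥ 1, m ≥ 0}`; the letter `y_{k,m}` is encoded as the
pair `(k-1, m) : ℕ × ℕ`.  Formal power series in the variables
`X₁, X₂, … , Y₁, Y₂, …` with coefficients in `ℚ⟨Y^bi⟩` are realized as functions
from exponents (finitely supported functions on `ℕ ⊕ ℕ`, `Sum.inl i ↔ X_{i+1}` and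
`Sum.inr i ↔ Y_{i+1}`) to `ℚ⟨Y^bi⟩`; products of series are taken coefficientwise
via `Finset.antidiagonal`.
-/

open Finsupp

/-- `ℚ⟨Y^bi⟩`; a word is a list of letters `(a, m) : ℕ × ℕ`, standing for `y_{a+1,m}`. -/
abbrev QY : Type := List (ℕ × ℕ) →₀ ℚ

/-- The word `y_{k₁,m₁} ⋯ y_{k_d,m_d}` (given by its list of encoded letters). -/
noncomputable def wY (w : List (ℕ × ℕ)) : QY := Finsupp.single w 1

/-- Left concatenation by a letter, extended `ℚ`-linearly. -/
noncomputable def consY (a : ℕ × ℕ) (x : QY) : QY := Finsupp.mapDomain (List.cons a) x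

/-- The stuffle product `∗` on words: `y_{k₁,m₁}u ∗ y_{k₂,m₂}v
= y_{k₁,m₁}(u ∗ y_{k₂,m₂}v) + y_{k₂,m₂}(y_{k₁,m₁}u ∗ v) + y_{k₁+k₂,m₁+m₂}(u ∗ v)`.
(In the encoding `(a,m) = y_{a+1,m}` the third letter is `(a₁+a₂+1, m₁+m₂)`.) -/
noncomputable def stufW : List (ℕ × ℕ) → List (ℕ × ℕ) → QY
  | [], w => wY w
  | x :: u, [] => wY (x :: u)
  | x :: u, y :: v =>
      consY x (stufW u (y :: v)) + consY y (stufW (x :: u) v) +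
        consY (x.1 + y.1 + 1, x.2 + y.2) (stufW u v)
  termination_by u v => u.length + v.length

/-- The stuffle product `∗` on `ℚ⟨Y^bi⟩` (ℚ-bilinear extension). -/
noncomputable def stuf (x y : QY) : QY :=
  x.sum fun u a => y.sum fun v b => (a * b) • stufW u v

/-- The concatenation product on `ℚ⟨Y^bi⟩` (ℚ-bilinear extension). -/
noncomputable def concY (x y : QY) : QY :=
  x.sum fun u a => y.sum fun v b => Finsupp.single (u ++ v) (a * b)

/-- Exponents of monomials in variables `X_{i+1} = Sum.inl i`, `Y_{i+1} = Sum.inr i`. -/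
abbrev Expo : Type := (ℕ ⊕ ℕ) →₀ ℕ

/-- The product of two formal power series with coefficients in `ℚ⟨Y^bi⟩`, where the
coefficients are multiplied with the bilinear map `f` (e.g. `stuf` or `concY`). -/
noncomputable def mulSY (f : QY → QY → QY) (F G : Expo → QY) : Expo → QY :=
  fun e => ∑ p ∈ Finset.HasAntidiagonal.antidiagonal e, f (F p.1) (G p.2)

open scoped Classical in
/-- The generating series of words `ρ(W)(X_{i₁+1}, …; Y_{i₁+1}, …)` of `ℚ⟨Y^bi⟩` over the
(0-indexed) positions in `l`:
`∑ y_{k₁,m₁}⋯y_{k_d,m_d} · X₁^{k₁-1}(Y₁^{m₁}/m₁!) ⋯ X_d^{k_d-1}(Y_d^{m_d}/m_d!)`. -/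
noncomputable def genY (l : List ℕ) : Expo → QY := fun e =>
  if ∀ j : ℕ, j ∉ l → e (Sum.inl j) = 0 ∧ e (Sum.inr j) = 0 then
    ((l.map fun i => ((e (Sum.inr i)).factorial : ℚ)).prod)⁻¹ •
      wY (l.map fun i => (e (Sum.inl i), e (Sum.inr i)))
  else 0

open scoped Classical in
/-- The difference quotient
`(ρ(W)(X_{i₁+1}; Y_{j₁+1}+Y_{j₂+1}) - ρ(W)(X_{i₂+1}; Y_{j₁+1}+Y_{j₂+1}))/(X_{i₁+1} - X_{i₂+1})`,
i.e. the series whose coefficient at `X_{i₁+1}^a X_{i₂+1}^b Y_{j₁+1}^{m₁} Y_{j₂+1}^{m₂}` is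
`y_{a+b+2, m₁+m₂}/(m₁! m₂!)`. -/
noncomputable def diffqY (i₁ i₂ j₁ j₂ : ℕ) : Expo → QY := fun e =>
  if ∀ v : ℕ ⊕ ℕ, v ≠ Sum.inl i₁ → v ≠ Sum.inl i₂ → v ≠ Sum.inr j₁ → v ≠ Sum.inr j₂ →
      e v = 0 then
    (((e (Sum.inr j₁)).factorial * (e (Sum.inr j₂)).factorial : ℚ))⁻¹ •
      wY [(e (Sum.inl i₁) + e (Sum.inl i₂) + 1, e (Sum.inr j₁) + e (Sum.inr j₂))]
  else 0

section
open Finsupp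
open scoped Classical
/-- `p` is supported on variables with indices in `s`. -/
def supOn (s : List ℕ) (p : Expo) : Prop :=
  ∀ j : ℕ, j ∉ s → p (Sum.inl j) = 0 ∧ p (Sum.inr j) = 0

/-- Restriction of an exponent to the variables with indices in `s`. -/
noncomputable def restr (s : List ℕ) (e : Expo) : Expo :=
  e.filter (fun v => Sum.elim (· ∈ s) (· ∈ s) v)

lemma restr_inl (s : List ℕ) (e : Expo) (j : ℕ) :
    restr s e (Sum.inl j) = if j ∈ s then e (Sum.inl j) else 0 := by
  by_cases h : j ∈ s <;> simp [restr, Finsupp.filter_apply, h]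

lemma restr_inr (s : List ℕ) (e : Expo) (j : ℕ) :
    restr s e (Sum.inr j) = if j ∈ s then e (Sum.inr j) else 0 := by
  by_cases h : j ∈ s <;> simp [restr, Finsupp.filter_apply, h]

lemma supOn_restr (s : List ℕ) (e : Expo) : supOn s (restr s e) := by
  intro j hj
  simp [restr_inl, restr_inr, hj]

lemma restr_restr (s t : List ℕ) (e : Expo) (h : ∀ j ∈ s, j ∈ t) :
    restr s (restr t e) = restr s e := by
  ext v
  rcases v with j | j <;>
    · simp only [restr_inl, restr_inr]
      by_cases hj : j ∈ s <;> simp [hj, h j]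

lemma restr_add_restr (s t : List ℕ) (e : Expo) (hd : ∀ j ∈ s, j ∉ t)
    (he : supOn (s ++ t) e) : restr s e + restr t e = e := by
  ext v
  rcases v with j | j <;>
  · rw [Finsupp.add_apply]
    by_cases hs : j ∈ s
    · simp [restr_inl, restr_inr, hs, hd j hs]
    · by_cases ht : j ∈ t
      · simp [restr_inl, restr_inr, hs, ht]
      · have := he j (by simp [hs, ht])
        simp [restr_inl, restr_inr, hs, ht, this.1, this.2]

lemma mulSY_split (f : QY → QY → QY) (hf1 : ∀ y, f 0 y = 0) (hf2 : ∀ x, f x 0 = 0)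
    (F G : Expo → QY) (s t : List ℕ) (hst : ∀ j ∈ s, j ∉ t)
    (hF : ∀ p, ¬ supOn s p → F p = 0) (hG : ∀ p, ¬ supOn t p → G p = 0) (e : Expo) :
    mulSY f F G e = if supOn (s ++ t) e then f (F (restr s e)) (G (restr t e)) else 0 := by
  rw [mulSY]
  split_ifs with he
  · refine Finset.sum_eq_single (restr s e, restr t e) ?_ ?_
    · rintro ⟨p₁, p₂⟩ hp hne
      rw [Finset.HasAntidiagonal.mem_antidiagonal] at hp
      by_cases h1 : supOn s p₁
      · by_cases h2 : supOn t p₂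
        · exfalso; apply hne
          have hp1 : p₁ = restr s e := by
            ext v
            rcases v with j | j <;>
            · by_cases hs : j ∈ s
              · have h2' := (h2 j (hst j hs))
                have := congrArg (fun q => q (Sum.inl j)) hp
                have := congrArg (fun q => q (Sum.inr j)) hp
                simp only [Finsupp.add_apply] at *
                first
                | (rw [restr_inl, if_pos hs]; omega)
                | (rw [restr_inr, if_pos hs]; omega)
              · have h1' := h1 j hs
                simp [restr_inl, restr_inr, hs, h1'.1, h1'.2]
          have hp2 : p₂ = restr t e := by
            rw [hp1] at hp
            have : restr s e + restr t e = e := restr_add_restr s t e hst he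
            have := hp.trans this.symm
            exact (add_left_cancel this)
          rw [hp1, hp2]
        · rw [hG _ h2, hf2]
      · rw [hF _ h1, hf1]
    · intro hmem
      exfalso
      exact hmem (Finset.HasAntidiagonal.mem_antidiagonal.2 (restr_add_restr s t e hst he))
  · refine Finset.sum_eq_zero ?_
    rintro ⟨p₁, p₂⟩ hp
    rw [Finset.HasAntidiagonal.mem_antidiagonal] at hp
    rw [supOn] at he; push_neg at he
    obtain ⟨j, hj, hj0⟩ := he
    simp only [List.mem_append] at hj; push_neg at hj
    have h1 := congrArg (fun q => q (Sum.inl j)) hp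
    have h2 := congrArg (fun q => q (Sum.inr j)) hp
    simp only [Finsupp.add_apply] at h1 h2
    by_cases hc : p₁ (Sum.inl j) = 0 ∧ p₁ (Sum.inr j) = 0
    · have : ¬ supOn t p₂ := by
        intro hsup
        have := hsup j hj.2
        omega
      rw [hG _ this, hf2]
    · have : ¬ supOn s p₁ := by
        intro hsup; exact hc (hsup j hj.1)
      rw [hF _ this, hf1]

lemma mulSY_eq_zero (f : QY → QY → QY) (hf1 : ∀ y, f 0 y = 0) (hf2 : ∀ x, f x 0 = 0)
    (F G : Expo → QY) (s t : List ℕ) (hst : ∀ j ∈ s, j ∉ t)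
    (hF : ∀ p, ¬ supOn s p → F p = 0) (hG : ∀ p, ¬ supOn t p → G p = 0) (e : Expo)
    (he : ¬ supOn (s ++ t) e) : mulSY f F G e = 0 := by
  rw [mulSY_split f hf1 hf2 F G s t hst hF hG e, if_neg he]
end

section
open Finsupp
open scoped Classical

lemma genY_zero (l : List ℕ) (p : Expo) (h : ¬ supOn l p) : genY l p = 0 := by
  rw [genY, if_neg]
  exact h

lemma genY_restr (l : List ℕ) (e : Expo) :
    genY l (restr l e) =
      ((l.map fun i => ((e (Sum.inr i)).factorial : ℚ)).prod)⁻¹ •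
        wY (l.map fun i => (e (Sum.inl i), e (Sum.inr i))) := by
  have hs : ∀ j ∉ l, (restr l e) (Sum.inl j) = 0 ∧ (restr l e) (Sum.inr j) = 0 :=
    supOn_restr l e
  rw [genY, if_pos hs]
  have h1 : (l.map fun i => ((restr l e (Sum.inr i)).factorial : ℚ))
      = l.map fun i => ((e (Sum.inr i)).factorial : ℚ) := by
    refine List.map_congr_left fun i hi => by rw [restr_inr, if_pos hi]
  have h2 : (l.map fun i => (restr l e (Sum.inl i), restr l e (Sum.inr i)))
      = l.map fun i => (e (Sum.inl i), e (Sum.inr i)) := by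
    refine List.map_congr_left fun i hi => by rw [restr_inl, restr_inr, if_pos hi, if_pos hi]
  rw [h1, h2]

lemma diffq_zero (n : ℕ) (p : Expo) (h : ¬ supOn [0, n] p) : diffqY 0 n 0 n p = 0 := by
  rw [diffqY, if_neg]
  intro hc
  apply h
  intro j hj
  simp only [List.mem_cons, List.not_mem_nil] at hj
  push_neg at hj
  constructor
  · exact hc (Sum.inl j) (by simp [hj.1]) (by simp [hj.2.1]) (by simp) (by simp)
  · exact hc (Sum.inr j) (by simp) (by simp) (by simp [hj.1]) (by simp [hj.2.1])

lemma diffq_restr (n : ℕ) (e : Expo) :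
    diffqY 0 n 0 n (restr [0, n] e) =
      (((e (Sum.inr 0)).factorial * (e (Sum.inr n)).factorial : ℚ))⁻¹ •
        wY [(e (Sum.inl 0) + e (Sum.inl n) + 1, e (Sum.inr 0) + e (Sum.inr n))] := by
  rw [diffqY, if_pos]
  · rw [restr_inl, restr_inl, restr_inr, restr_inr]
    simp
  · rintro (j | j) h1 h2 h3 h4
    · rw [restr_inl, if_neg]
      simp only [List.mem_cons, List.not_mem_nil, or_false]
      push_neg
      exact ⟨by simpa using h1, by simpa using h2⟩
    · rw [restr_inr, if_neg]
      simp only [List.mem_cons, List.not_mem_nil, or_false]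
      push_neg
      exact ⟨by simpa using h3, by simpa using h4⟩

lemma stuf_zero_left (y : QY) : stuf 0 y = 0 := by simp [stuf]
lemma stuf_zero_right (x : QY) : stuf x 0 = 0 := by simp [stuf]
lemma concY_zero_left (y : QY) : concY 0 y = 0 := by simp [concY]
lemma concY_zero_right (x : QY) : concY x 0 = 0 := by simp [concY]

lemma stuf_single (u v : List (ℕ×ℕ)) (a b : ℚ) :
    stuf (Finsupp.single u a) (Finsupp.single v b) = (a*b) • stufW u v := by
  rw [stuf, Finsupp.sum_single_index, Finsupp.sum_single_index] <;> simp

lemma smul_wY (u : List (ℕ×ℕ)) (a : ℚ) : a • wY u = Finsupp.single u a := by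
  rw [wY, Finsupp.smul_single]
  norm_num

lemma concY_single_left (x : ℕ×ℕ) (a : ℚ) (Z : QY) :
    concY (Finsupp.single [x] a) Z = a • Finsupp.mapDomain (List.cons x) Z := by
  rw [concY, Finsupp.sum_single_index]
  · rw [Finsupp.mapDomain, Finsupp.smul_sum]
    simp [Finsupp.smul_single, mul_comm]
  · simp

lemma stufW_cons (a b : ℕ×ℕ) (u v : List (ℕ×ℕ)) :
    stufW (a::u) (b::v) = consY a (stufW u (b :: v)) + consY b (stufW (a :: u) v) +
        consY (a.1 + b.1 + 1, a.2 + b.2) (stufW u v) := by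
  rw [stufW]
end

section
open Finsupp
open scoped Classical

lemma supOn_congr (s t : List ℕ) (h : ∀ j, j ∈ s ↔ j ∈ t) (e : Expo) :
    supOn s e ↔ supOn t e := by
  unfold supOn
  exact ⟨fun hh j hj => hh j (fun c => hj ((h j).mp c)),
         fun hh j hj => hh j (fun c => hj ((h j).mpr c))⟩


section
open Finsupp
open scoped Classical

/-- For `0 < n < d`,
`ρ(W)(X₁,…,X_n;Y₁,…,Y_n) ∗ ρ(W)(X_{n+1},…,X_d;Y_{n+1},…,Y_d)`
equals the sum of the three recursive terms. -/
theorem stuffle_gen_series (d n : ℕ) (h0 : 0 < n) (hnd : n < d) :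
    mulSY stuf (genY (List.range n)) (genY ((List.range (d - n)).map fun i => n + i))
      =
    mulSY concY (genY [0])
        (mulSY stuf (genY ((List.range (n - 1)).map fun i => 1 + i))
          (genY ((List.range (d - n)).map fun i => n + i)))
      +
    mulSY concY (genY [n])
        (mulSY stuf (genY (List.range n))
          (genY ((List.range (d - n - 1)).map fun i => (n + 1) + i)))
      +
    mulSY concY (diffqY 0 n 0 n)
        (mulSY stuf (genY ((List.range (n - 1)).map fun i => 1 + i))
          (genY ((List.range (d - n - 1)).map fun i => (n + 1) + i))) := by
  funext e
  simp only [Pi.add_apply]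
  set L := List.range n with hLdef
  set B := (List.range (n - 1)).map (fun i => 1 + i) with hBdef
  set C := (List.range (d - n)).map (fun i => n + i) with hCdef
  set C' := (List.range (d - n - 1)).map (fun i => (n + 1) + i) with hC'def
  have mL : ∀ j, j ∈ L ↔ j < n := by simp [hLdef]
  have mB : ∀ j, j ∈ B ↔ 1 ≤ j ∧ j < n := by
    intro j; rw [hBdef]; simp only [List.mem_map, List.mem_range]
    constructor
    · rintro ⟨a, ha, rfl⟩; omega
    · intro h; exact ⟨j - 1, by omega, by omega⟩
  have mC : ∀ j, j ∈ C ↔ n ≤ j ∧ j < d := by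
    intro j; rw [hCdef]; simp only [List.mem_map, List.mem_range]
    constructor
    · rintro ⟨a, ha, rfl⟩; omega
    · intro h; exact ⟨j - n, by omega, by omega⟩
  have mC' : ∀ j, j ∈ C' ↔ n + 1 ≤ j ∧ j < d := by
    intro j; rw [hC'def]; simp only [List.mem_map, List.mem_range]
    constructor
    · rintro ⟨a, ha, rfl⟩; omega
    · intro h; exact ⟨j - (n+1), by omega, by omega⟩
  have hd0 : ∀ j ∈ L, j ∉ C := fun j hj hj2 => by
    rw [mL] at hj; rw [mC] at hj2; omega
  have hd1 : ∀ j ∈ ([0] : List ℕ), j ∉ B ++ C := by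
    intro j hj hj2
    simp only [List.mem_singleton] at hj
    rw [List.mem_append, mB, mC] at hj2; omega
  have hdBC : ∀ j ∈ B, j ∉ C := fun j hj hj2 => by
    rw [mB] at hj; rw [mC] at hj2; omega
  have hd2 : ∀ j ∈ ([n] : List ℕ), j ∉ L ++ C' := by
    intro j hj hj2
    simp only [List.mem_singleton] at hj
    rw [List.mem_append, mL, mC'] at hj2; omega
  have hdLC' : ∀ j ∈ L, j ∉ C' := fun j hj hj2 => by
    rw [mL] at hj; rw [mC'] at hj2; omega
  have hd3 : ∀ j ∈ ([0, n] : List ℕ), j ∉ B ++ C' := by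
    intro j hj hj2
    simp only [List.mem_cons, List.not_mem_nil, or_false] at hj
    rw [List.mem_append, mB, mC'] at hj2; omega
  have hdBC' : ∀ j ∈ B, j ∉ C' := fun j hj hj2 => by
    rw [mB] at hj; rw [mC'] at hj2; omega
  have hz1 : ∀ p, ¬ supOn (B ++ C) p → mulSY stuf (genY B) (genY C) p = 0 :=
    fun p hp => mulSY_eq_zero _ stuf_zero_left stuf_zero_right _ _ _ _ hdBC
      (genY_zero B) (genY_zero C) p hp
  have hz2 : ∀ p, ¬ supOn (L ++ C') p → mulSY stuf (genY L) (genY C') p = 0 :=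
    fun p hp => mulSY_eq_zero _ stuf_zero_left stuf_zero_right _ _ _ _ hdLC'
      (genY_zero L) (genY_zero C') p hp
  have hz3 : ∀ p, ¬ supOn (B ++ C') p → mulSY stuf (genY B) (genY C') p = 0 :=
    fun p hp => mulSY_eq_zero _ stuf_zero_left stuf_zero_right _ _ _ _ hdBC'
      (genY_zero B) (genY_zero C') p hp
  rw [mulSY_split stuf stuf_zero_left stuf_zero_right _ _ L C hd0
        (genY_zero L) (genY_zero C) e,
      mulSY_split concY concY_zero_left concY_zero_right _ _ [0] (B ++ C) hd1
        (genY_zero [0]) hz1 e,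
      mulSY_split concY concY_zero_left concY_zero_right _ _ [n] (L ++ C') hd2
        (genY_zero [n]) hz2 e,
      mulSY_split concY concY_zero_left concY_zero_right _ _ [0, n] (B ++ C') hd3
        (diffq_zero n) hz3 e]
  have q1 : supOn ([0] ++ (B ++ C)) e ↔ supOn (L ++ C) e := by
    refine supOn_congr _ _ (fun j => ?_) e
    simp only [List.mem_append, List.mem_singleton, mL, mB, mC]
    omega
  have q2 : supOn ([n] ++ (L ++ C')) e ↔ supOn (L ++ C) e := by
    refine supOn_congr _ _ (fun j => ?_) e
    simp only [List.mem_append, List.mem_singleton, mL, mC, mC']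
    omega
  have q3 : supOn ([0, n] ++ (B ++ C')) e ↔ supOn (L ++ C) e := by
    refine supOn_congr _ _ (fun j => ?_) e
    simp only [List.mem_append, List.mem_cons, List.not_mem_nil, or_false,
      mL, mB, mC, mC']
    omega
  by_cases hsup : supOn (L ++ C) e
  · rw [if_pos hsup, if_pos (q1.mpr hsup), if_pos (q2.mpr hsup), if_pos (q3.mpr hsup)]
    rw [mulSY_split stuf stuf_zero_left stuf_zero_right _ _ B C hdBC
          (genY_zero B) (genY_zero C) (restr (B ++ C) e),
        mulSY_split stuf stuf_zero_left stuf_zero_right _ _ L C' hdLC'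
          (genY_zero L) (genY_zero C') (restr (L ++ C') e),
        mulSY_split stuf stuf_zero_left stuf_zero_right _ _ B C' hdBC'
          (genY_zero B) (genY_zero C') (restr (B ++ C') e)]
    rw [if_pos (supOn_restr (B ++ C) e), if_pos (supOn_restr (L ++ C') e),
        if_pos (supOn_restr (B ++ C') e)]
    rw [restr_restr B (B ++ C) e (fun j hj => List.mem_append_left _ hj),
        restr_restr C (B ++ C) e (fun j hj => List.mem_append_right _ hj),
        restr_restr L (L ++ C') e (fun j hj => List.mem_append_left _ hj),
        restr_restr C' (L ++ C') e (fun j hj => List.mem_append_right _ hj),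
        restr_restr B (B ++ C') e (fun j hj => List.mem_append_left _ hj),
        restr_restr C' (B ++ C') e (fun j hj => List.mem_append_right _ hj)]
    simp only [genY_restr, diffq_restr n e]
    have hL1 : L = 0 :: B := by
      rw [hLdef, hBdef]
      obtain ⟨k, hk⟩ : ∃ k, n = k + 1 := ⟨n - 1, by omega⟩
      rw [hk, List.range_succ_eq_map]
      simp only [Nat.add_sub_cancel]
      congr 1
      exact List.map_congr_left fun a _ => by omega
    have hC1 : C = n :: C' := by
      rw [hCdef, hC'def]
      obtain ⟨k, hk⟩ : ∃ k, d - n = k + 1 := ⟨d - n - 1, by omega⟩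
      have hk' : d - n - 1 = k := by omega
      rw [hk', hk, List.range_succ_eq_map]
      simp only [List.map_cons, List.map_map, Nat.add_zero]
      congr 1
      exact List.map_congr_left fun a _ => by simp only [Function.comp_apply]; omega
    rw [hL1, hC1]
    simp only [List.map_cons, List.map_nil, List.prod_cons, List.prod_nil, mul_one]
    simp only [smul_wY]
    simp only [stuf_single, concY_single_left, stufW_cons, consY]
    simp only [Finsupp.mapDomain_smul, smul_smul, smul_add]
    match_scalars <;> (simp only [mul_inv]; ring)
  · rw [if_neg hsup, if_neg (fun h => hsup (q1.mp h)), if_neg (fun h => hsup (q2.mp h)),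
        if_neg (fun h => hsup (q3.mp h))]
    simp

end
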